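/- (Localization mass equals the atom of the limit measure.) If cos φ < |c|, then Σ_{x≥0, x even} L_m(x) = Σ_{x≥1, x odd} L_m(x) = C_m; if cos φ > −|c|, then for every r ∈ K_κ, Σ_{x≥0, x even} L_p^r(x) = Σ_{x≥1, x odd} L_p^r(x) = C_p^r. In particular the delta-measure weights C_m and C_p^r in the weak limit equal the total localization mass of L_m and L_p^r on each parity class. -/

import Mathlib

/-!
The localization mass summed over each parity class equals the atom of the
limit measure: `Σ_{x even} L_m(x) = Σ_{x odd} L_m(x) = C_m`, and similarly for
`L_p^r` and `C_p^r`.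
-/

noncomputable section

namespace QW

/-- Kronecker delta `δ_0(x)`. -/
def d0 (x : ℕ) : ℝ := if x = 0 then 1 else 0

def Kp (c : ℂ) : ℝ := ‖1 + c‖ ^ 2

def Km (c : ℂ) : ℝ := ‖1 - c‖ ^ 2

/-- `Γ_+(x)`. -/
def Gp (κ : ℕ) (a c : ℂ) (x : ℕ) : ℝ :=
  (2 / (κ : ℝ)) ^ 2 * ‖c‖ ^ 2 * (Real.cos c.arg + ‖c‖) ^ 2 / Kp c ^ 2 *
    (d0 x + (1 - d0 x) * (‖a‖ ^ 2 / Kp c) ^ (x - 1) * (1 + ‖a‖ ^ 2 / Kp c))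

/-- `Γ_-(x)`. -/
def Gm (κ : ℕ) (a c : ℂ) (x : ℕ) : ℝ :=
  (2 / (κ : ℝ)) ^ 2 * ‖c‖ ^ 2 * (Real.cos c.arg - ‖c‖) ^ 2 / Km c ^ 2 *
    (d0 x + (1 - d0 x) * (‖a‖ ^ 2 / Km c) ^ (x - 1) * (1 + ‖a‖ ^ 2 / Km c))

/-- `L_m(x)`. -/
def Lm (κ : ℕ) (a c : ℂ) (ψ : Fin κ → ℂ) (x : ℕ) : ℝ :=
  Gm κ a c x * ‖∑ j, ψ j‖ ^ 2

/-- `L_p^r(x)`. -/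
def Lp (κ : ℕ) (a c : ℂ) (ψ : Fin κ → ℂ) (r : Fin κ) (x : ℕ) : ℝ :=
  Gp κ a c x * ‖∑ j, (ψ j - ψ r)‖ ^ 2

/-- `C_m`. -/
def Cm (κ : ℕ) (c : ℂ) (ψ : Fin κ → ℂ) : ℝ :=
  (2 / (κ : ℝ)) ^ 2 * ‖c‖ * (‖c‖ - Real.cos c.arg) / (2 * Km c) *
    ‖∑ j, ψ j‖ ^ 2

/-- `C_p^r`. -/
def Cp (κ : ℕ) (c : ℂ) (ψ : Fin κ → ℂ) (r : Fin κ) : ℝ :=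
  (2 / (κ : ℝ)) ^ 2 * ‖c‖ * (‖c‖ + Real.cos c.arg) / (2 * Kp c) *
    ‖∑ j, (ψ j - ψ r)‖ ^ 2

lemma tsum_even_aux (B q : ℝ) (hq0 : 0 ≤ q) (hq1 : q < 1) :
    (∑' n : ℕ, B * (d0 (2 * n) + (1 - d0 (2 * n)) * q ^ (2 * n - 1) * (1 + q)))
      = B / (1 - q) := by
  have h2 : q ^ 2 < 1 := by nlinarith
  have h2' : (0:ℝ) ≤ q ^ 2 := by positivity
  have hfun : ∀ n : ℕ,
      B * (d0 (2 * (n + 1)) + (1 - d0 (2 * (n + 1))) * q ^ (2 * (n + 1) - 1) * (1 + q))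
        = (B * q * (1 + q)) * (q ^ 2) ^ n := by
    intro n
    have h1 : 2 * (n + 1) - 1 = 2 * n + 1 := by omega
    have hp : q ^ (2 * n + 1) = (q ^ 2) ^ n * q := by
      rw [pow_succ, pow_mul]
    simp only [d0, h1, hp, if_neg (by omega : 2 * (n + 1) ≠ 0)]
    ring
  have hshift : Summable (fun n : ℕ =>
      B * (d0 (2 * (n + 1)) + (1 - d0 (2 * (n + 1))) * q ^ (2 * (n + 1) - 1) * (1 + q))) := by
    simpa [hfun] using (summable_geometric_of_lt_one h2' h2).mul_left (B * q * (1 + q))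
  have hsum : Summable (fun n : ℕ =>
      B * (d0 (2 * n) + (1 - d0 (2 * n)) * q ^ (2 * n - 1) * (1 + q))) := by
    have := (summable_nat_add_iff (f := fun n : ℕ =>
      B * (d0 (2 * n) + (1 - d0 (2 * n)) * q ^ (2 * n - 1) * (1 + q))) 1).mp
    exact this (by simpa using hshift)
  rw [Summable.tsum_eq_zero_add hsum]
  have h0 : B * (d0 (2 * 0) + (1 - d0 (2 * 0)) * q ^ (2 * 0 - 1) * (1 + q)) = B := by
    simp [d0]
  rw [h0, tsum_congr hfun, tsum_mul_left, tsum_geometric_of_lt_one h2' h2]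
  have hne1 : (1 : ℝ) - q ≠ 0 := by linarith
  have hne2 : (1 : ℝ) + q ≠ 0 := by linarith
  have hne3 : (1 : ℝ) - q ^ 2 ≠ 0 := by nlinarith
  field_simp
  ring

lemma tsum_odd_aux (B q : ℝ) (hq0 : 0 ≤ q) (hq1 : q < 1) :
    (∑' n : ℕ, B * (d0 (2 * n + 1) + (1 - d0 (2 * n + 1)) * q ^ (2 * n + 1 - 1) * (1 + q)))
      = B / (1 - q) := by
  have h2 : q ^ 2 < 1 := by nlinarith
  have h2' : (0:ℝ) ≤ q ^ 2 := by positivity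
  have hfun : ∀ n : ℕ,
      B * (d0 (2 * n + 1) + (1 - d0 (2 * n + 1)) * q ^ (2 * n + 1 - 1) * (1 + q))
        = (B * (1 + q)) * (q ^ 2) ^ n := by
    intro n
    have h1 : 2 * n + 1 - 1 = 2 * n := by omega
    simp only [d0, h1, pow_mul, if_neg (by omega : 2 * n + 1 ≠ 0)]
    ring
  rw [tsum_congr hfun, tsum_mul_left, tsum_geometric_of_lt_one h2' h2]
  have hne1 : (1 : ℝ) - q ≠ 0 := by linarith
  have hne2 : (1 : ℝ) + q ≠ 0 := by linarith
  have hne3 : (1 : ℝ) - q ^ 2 ≠ 0 := by nlinarith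
  field_simp
  ring

lemma col_norm (a b c d : ℂ)
    (hU : !![a, b; c, d] ∈ Matrix.unitaryGroup (Fin 2) ℂ) :
    ‖a‖ ^ 2 + ‖c‖ ^ 2 = 1 := by
  have h1 : star !![a, b; c, d] * !![a, b; c, d] = 1 := hU.1
  have h2 : (star !![a, b; c, d] * !![a, b; c, d]) 0 0 = (1 : Matrix (Fin 2) (Fin 2) ℂ) 0 0 := by
    rw [h1]
  simp [Matrix.mul_apply, Fin.sum_univ_two, Matrix.one_apply, Matrix.star_apply] at h2
  have := congrArg Complex.re h2
  simpa [Complex.sq_norm, Complex.normSq_apply, Complex.mul_re, Complex.conj_re,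
    Complex.conj_im] using this

set_option maxHeartbeats 1000000 in
/-- **Localization mass equals the atom of the limit measure.** -/
theorem localization_mass (κ : ℕ) (hκ : 1 ≤ κ) (a b c d : ℂ)
    (hU : !![a, b; c, d] ∈ Matrix.unitaryGroup (Fin 2) ℂ) (h0 : a * b * c * d ≠ 0)
    (ψ : Fin κ → ℂ) :
    (Real.cos c.arg < ‖c‖ →
        (∑' n : ℕ, Lm κ a c ψ (2 * n)) = Cm κ c ψ ∧
          (∑' n : ℕ, Lm κ a c ψ (2 * n + 1)) = Cm κ c ψ) ∧
      (-‖c‖ < Real.cos c.arg →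
        ∀ r : Fin κ,
          (∑' n : ℕ, Lp κ a c ψ r (2 * n)) = Cp κ c ψ r ∧
            (∑' n : ℕ, Lp κ a c ψ r (2 * n + 1)) = Cp κ c ψ r) := by
  have ha : a ≠ 0 := fun h => h0 (by simp [h])
  have hcne : c ≠ 0 := fun h => h0 (by simp [h])
  have hκne : (κ : ℝ) ≠ 0 := Nat.cast_ne_zero.mpr (by omega)
  have hMa : ‖a‖ ^ 2 + ‖c‖ ^ 2 = 1 := col_norm a b c d hU
  have hKcpos : 0 < ‖c‖ := norm_pos_iff.mpr hcne
  have hre : c.re = ‖c‖ * Real.cos c.arg := by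
    rw [Complex.cos_arg hcne]
    field_simp [ne_of_gt hKcpos]
  have hapos : 0 < ‖a‖ ^ 2 := pow_pos (norm_pos_iff.mpr ha) 2
  have hKm : Km c = 1 + ‖c‖ ^ 2 - 2 * ‖c‖ * Real.cos c.arg := by
    rw [Km, Complex.sq_norm, Complex.normSq_apply]
    simp only [Complex.sub_re, Complex.sub_im, Complex.one_re, Complex.one_im]
    have hc2 : ‖c‖ ^ 2 = c.re ^ 2 + c.im ^ 2 := by
      rw [Complex.sq_norm, Complex.normSq_apply]; ring
    nlinarith [hre]
  have hKp : Kp c = 1 + ‖c‖ ^ 2 + 2 * ‖c‖ * Real.cos c.arg := by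
    rw [Kp, Complex.sq_norm, Complex.normSq_apply]
    simp only [Complex.add_re, Complex.add_im, Complex.one_re, Complex.one_im]
    have hc2 : ‖c‖ ^ 2 = c.re ^ 2 + c.im ^ 2 := by
      rw [Complex.sq_norm, Complex.normSq_apply]; ring
    nlinarith [hre]
  constructor
  · intro hc
    have hgap : 0 < ‖c‖ - Real.cos c.arg := by linarith
    have hKmgt : ‖a‖ ^ 2 < Km c := by nlinarith
    have hKmpos : 0 < Km c := lt_trans hapos hKmgt
    set q := ‖a‖ ^ 2 / Km c with hq
    have hq0 : 0 ≤ q := by positivity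
    have hq1 : q < 1 := (div_lt_one hKmpos).mpr hKmgt
    set B := (2 / (κ : ℝ)) ^ 2 * ‖c‖ ^ 2 *
        (Real.cos c.arg - ‖c‖) ^ 2 / Km c ^ 2 *
        ‖∑ j, ψ j‖ ^ 2 with hB
    have heq : ∀ x, Lm κ a c ψ x = B * (d0 x + (1 - d0 x) * q ^ (x - 1) * (1 + q)) := by
      intro x
      simp only [Lm, Gm, hB, hq]
      ring
    have hfin : B / (1 - q) = Cm κ c ψ := by
      have h1q : 1 - q = 2 * ‖c‖ * (‖c‖ - Real.cos c.arg) / Km c := by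
        rw [eq_div_iff (ne_of_gt hKmpos), hq, sub_mul, one_mul,
          div_mul_cancel₀ _ (ne_of_gt hKmpos)]
        nlinarith
      rw [h1q, Cm, hB]
      have hKmne : Km c ≠ 0 := ne_of_gt hKmpos
      field_simp
      ring
    constructor
    · rw [tsum_congr (fun n => heq (2 * n)), tsum_even_aux B q hq0 hq1, hfin]
    · rw [tsum_congr (fun n => heq (2 * n + 1)), tsum_odd_aux B q hq0 hq1, hfin]
  · intro hc r
    have hgap : 0 < ‖c‖ + Real.cos c.arg := by linarith
    have hKpgt : ‖a‖ ^ 2 < Kp c := by nlinarith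
    have hKppos : 0 < Kp c := lt_trans hapos hKpgt
    set q := ‖a‖ ^ 2 / Kp c with hq
    have hq0 : 0 ≤ q := by positivity
    have hq1 : q < 1 := (div_lt_one hKppos).mpr hKpgt
    set B := (2 / (κ : ℝ)) ^ 2 * ‖c‖ ^ 2 *
        (Real.cos c.arg + ‖c‖) ^ 2 / Kp c ^ 2 *
        ‖∑ j, (ψ j - ψ r)‖ ^ 2 with hB
    have heq : ∀ x, Lp κ a c ψ r x = B * (d0 x + (1 - d0 x) * q ^ (x - 1) * (1 + q)) := by
      intro x
      simp only [Lp, Gp, hB, hq]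
      ring
    have hfin : B / (1 - q) = Cp κ c ψ r := by
      have h1q : 1 - q = 2 * ‖c‖ * (‖c‖ + Real.cos c.arg) / Kp c := by
        rw [eq_div_iff (ne_of_gt hKppos), hq, sub_mul, one_mul,
          div_mul_cancel₀ _ (ne_of_gt hKppos)]
        nlinarith
      rw [h1q, Cp, hB]
      have hKpne : Kp c ≠ 0 := ne_of_gt hKppos
      field_simp
      ring
    constructor
    · rw [tsum_congr (fun n => heq (2 * n)), tsum_even_aux B q hq0 hq1, hfin]
    · rw [tsum_congr (fun n => heq (2 * n + 1)), tsum_odd_aux B q hq0 hq1, hfin]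

end QW
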